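/- Let d ≥ 1 and let μ be a finite positive Borel measure on ℝ^d. Define T f(x) = ∫_{ℝ^d} f(x − y) dμ(y) for f ∈ 𝒮(ℝ^d). Then for all f, h ∈ 𝒮(ℝ^d) and all (x, ξ) ∈ ℝ^{2d}: W(Tf, Th)(x, ξ) = ∬_{ℝ^d × ℝ^d} e^{−2πi (y − y')·ξ} · W(f, h)(x − (y + y')/2, ξ) dμ(y) dμ(y'). (For d ≤ 3 and μ = μ_t the wave measure with total mass t supported in the ball of radius t, Tf = σ(t,D)f is the sine propagator of the wave equation.) -/

import Mathlib

open MeasureTheory Complex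
open scoped Real

noncomputable section

variable {d : ℕ}

/-- Cross-Wigner distribution
`W(f,h)(x,ξ) = ∫ f(x+u/2) conj(h(x−u/2)) e^{−2πi u·ξ} du`. -/
def crossWigner (f h : EuclideanSpace ℝ (Fin d) → ℂ)
    (x ξ : EuclideanSpace ℝ (Fin d)) : ℂ :=
  ∫ u, f (x + (1 / 2 : ℝ) • u) * (starRingEnd ℂ) (h (x - (1 / 2 : ℝ) • u)) *
    Complex.exp (-(2 * π * (inner ℝ u ξ : ℝ)) * Complex.I)

/-- The integrand of `crossWigner` for shifted arguments. -/
private def wigKer (f h : SchwartzMap (EuclideanSpace ℝ (Fin d)) ℂ)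
    (x ξ : EuclideanSpace ℝ (Fin d)) (u : EuclideanSpace ℝ (Fin d))
    (p : EuclideanSpace ℝ (Fin d) × EuclideanSpace ℝ (Fin d)) : ℂ :=
  f (x + (1 / 2 : ℝ) • u - p.1) * (starRingEnd ℂ) (h (x - (1 / 2 : ℝ) • u - p.2)) *
    Complex.exp (-(2 * π * (inner ℝ u ξ : ℝ)) * Complex.I)

private lemma norm_wigExp (u ξ : EuclideanSpace ℝ (Fin d)) :
    ‖Complex.exp (-(2 * π * (inner ℝ u ξ : ℝ)) * Complex.I)‖ = 1 := by
  rw [Complex.norm_exp]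
  simp

private lemma schwartz_norm_bound (f : SchwartzMap (EuclideanSpace ℝ (Fin d)) ℂ) :
    ∃ C : ℝ, 0 ≤ C ∧ ∀ z, ‖f z‖ ≤ C :=
  ⟨SchwartzMap.seminorm ℝ 0 0 f, apply_nonneg _ _, fun z => SchwartzMap.norm_le_seminorm ℝ f z⟩

private lemma schwartz_comp_integrable (h : SchwartzMap (EuclideanSpace ℝ (Fin d)) ℂ)
    (c : EuclideanSpace ℝ (Fin d)) :
    Integrable (fun u : EuclideanSpace ℝ (Fin d) => h (c - (1 / 2 : ℝ) • u)) := by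
  have h1 : Integrable (fun v : EuclideanSpace ℝ (Fin d) => h (c - v)) :=
    h.integrable.comp_sub_left c
  have h2 := h1.comp_smul (R := (1 / 2 : ℝ)) (by norm_num)
  simpa using h2

private lemma shift_norm_integral (h : SchwartzMap (EuclideanSpace ℝ (Fin d)) ℂ)
    (c : EuclideanSpace ℝ (Fin d)) :
    ∫ u : EuclideanSpace ℝ (Fin d), ‖h (c - (1 / 2 : ℝ) • u)‖
      = ∫ u : EuclideanSpace ℝ (Fin d), ‖h ((0 : EuclideanSpace ℝ (Fin d)) - (1 / 2 : ℝ) • u)‖ := by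
  have key := integral_add_right_eq_self (μ := (volume : Measure (EuclideanSpace ℝ (Fin d))))
    (fun u : EuclideanSpace ℝ (Fin d) => ‖h (c - (1 / 2 : ℝ) • u)‖) ((2 : ℝ) • c)
  rw [← key]
  refine integral_congr_ae (.of_forall fun u => ?_)
  have harg : c - (1 / 2 : ℝ) • (u + (2 : ℝ) • c)
      = (0 : EuclideanSpace ℝ (Fin d)) - (1 / 2 : ℝ) • u := by module
  show ‖h (c - (1 / 2 : ℝ) • (u + (2 : ℝ) • c))‖
      = ‖h ((0 : EuclideanSpace ℝ (Fin d)) - (1 / 2 : ℝ) • u)‖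
  rw [harg]

/-- **Wigner intertwining for convolution with a finite positive measure.** If
`Tf(x) = ∫ f(x − y) dμ(y)`, then for all `f, h ∈ 𝒮(ℝ^d)` and `(x,ξ) ∈ ℝ^{2d}`:
`W(Tf,Th)(x,ξ) = ∬ e^{−2πi(y−y')·ξ} W(f,h)(x − (y+y')/2, ξ) dμ(y) dμ(y')`.
For `d ≤ 3` and `μ = μ_t` the wave measure, `T` is the sine propagator of the wave
equation. -/
theorem crossWigner_measure_convolution
    (hd : 1 ≤ d) (μ : Measure (EuclideanSpace ℝ (Fin d))) [IsFiniteMeasure μ]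
    (f h : SchwartzMap (EuclideanSpace ℝ (Fin d)) ℂ)
    (x ξ : EuclideanSpace ℝ (Fin d)) :
    crossWigner (fun s => ∫ y, f (s - y) ∂μ) (fun s => ∫ y, h (s - y) ∂μ) x ξ
      = ∫ y, ∫ y', Complex.exp (-(2 * π * (inner ℝ (y - y') ξ : ℝ)) * Complex.I) *
          crossWigner (⇑f) (⇑h) (x - (1 / 2 : ℝ) • (y + y')) ξ ∂μ ∂μ := by
  classical
  obtain ⟨Cf, hCf0, hCf⟩ := schwartz_norm_bound f
  set P : Measure (EuclideanSpace ℝ (Fin d) × EuclideanSpace ℝ (Fin d)) := μ.prod μ with hP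
  set G := wigKer f h x ξ with hG
  -- continuity of the kernel
  have hGcont : Continuous (Function.uncurry G) := by
    rw [hG]
    unfold wigKer Function.uncurry
    apply Continuous.mul
    · apply Continuous.mul
      · exact f.continuous.comp (by fun_prop)
      · exact Complex.continuous_conj.comp (h.continuous.comp (by fun_prop))
    · exact Complex.continuous_exp.comp
        (((continuous_const.mul (Complex.continuous_ofReal.comp
          (continuous_fst.inner continuous_const))).neg).mul continuous_const)
  have hGnorm : ∀ u p, ‖G u p‖
      = ‖f (x + (1 / 2 : ℝ) • u - p.1)‖ * ‖h (x - (1 / 2 : ℝ) • u - p.2)‖ := by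
    intro u p
    rw [hG]
    unfold wigKer
    rw [norm_mul, norm_mul, norm_wigExp, RCLike.norm_conj, mul_one]
  -- integrability of the kernel on the product
  have hGint : Integrable (Function.uncurry G) (volume.prod P) := by
    rw [integrable_prod_iff' hGcont.aestronglyMeasurable]
    constructor
    · refine Filter.Eventually.of_forall fun p => ?_
      have hdom : Integrable
          (fun u : EuclideanSpace ℝ (Fin d) => Cf * ‖h (x - p.2 - (1 / 2 : ℝ) • u)‖) :=
        (schwartz_comp_integrable h (x - p.2)).norm.const_mul Cf
      refine hdom.mono' ?_ ?_
      · exact (hGcont.comp (continuous_id.prodMk continuous_const)).aestronglyMeasurable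
      · refine Filter.Eventually.of_forall fun u => ?_
        have harg : x - (1 / 2 : ℝ) • u - p.2 = x - p.2 - (1 / 2 : ℝ) • u := by module
        show ‖G u p‖ ≤ Cf * ‖h (x - p.2 - (1 / 2 : ℝ) • u)‖
        rw [hGnorm u p, harg]
        exact mul_le_mul_of_nonneg_right (hCf _) (norm_nonneg _)
    · set C : ℝ := ∫ u : EuclideanSpace ℝ (Fin d),
        ‖h ((0 : EuclideanSpace ℝ (Fin d)) - (1 / 2 : ℝ) • u)‖ with hC
      have hC0 : 0 ≤ C := integral_nonneg fun u => norm_nonneg _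
      refine (integrable_const (Cf * C)).mono' ?_ ?_
      · exact ((hGcont.norm.stronglyMeasurable).integral_prod_left').aestronglyMeasurable
      · refine Filter.Eventually.of_forall fun p => ?_
        rw [Real.norm_of_nonneg (integral_nonneg fun u => norm_nonneg _)]
        have hdom : Integrable
            (fun u : EuclideanSpace ℝ (Fin d) => Cf * ‖h (x - p.2 - (1 / 2 : ℝ) • u)‖) :=
          (schwartz_comp_integrable h (x - p.2)).norm.const_mul Cf
        have hmono : (∫ u, ‖Function.uncurry G (u, p)‖)
            ≤ ∫ u : EuclideanSpace ℝ (Fin d), Cf * ‖h (x - p.2 - (1 / 2 : ℝ) • u)‖ := by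
          refine integral_mono_of_nonneg (Filter.Eventually.of_forall fun u => norm_nonneg _)
            hdom (Filter.Eventually.of_forall fun u => ?_)
          have harg : x - (1 / 2 : ℝ) • u - p.2 = x - p.2 - (1 / 2 : ℝ) • u := by module
          show ‖G u p‖ ≤ Cf * ‖h (x - p.2 - (1 / 2 : ℝ) • u)‖
          rw [hGnorm u p, harg]
          exact mul_le_mul_of_nonneg_right (hCf _) (norm_nonneg _)
        refine hmono.trans ?_
        rw [integral_const_mul, shift_norm_integral h (x - p.2), ← hC]
  -- Step B: rewrite the left-hand side as an iterated integral
  have stepB : crossWigner (fun s => ∫ y, f (s - y) ∂μ) (fun s => ∫ y, h (s - y) ∂μ) x ξ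
      = ∫ u, ∫ p, G u p ∂P := by
    unfold crossWigner
    refine integral_congr_ae (Filter.Eventually.of_forall fun u => ?_)
    simp only []
    rw [← integral_conj, ← integral_prod_mul, ← integral_mul_const]
    rfl
  -- Step D: pointwise identification of the inner integral
  have stepD : ∀ p : EuclideanSpace ℝ (Fin d) × EuclideanSpace ℝ (Fin d),
      ∫ u, G u p = Complex.exp (-(2 * π * (inner ℝ (p.1 - p.2) ξ : ℝ)) * Complex.I) *
        crossWigner (⇑f) (⇑h) (x - (1 / 2 : ℝ) • (p.1 + p.2)) ξ := by
    intro p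
    rw [← integral_add_right_eq_self (fun u => G u p) (p.1 - p.2)]
    unfold crossWigner
    rw [← integral_const_mul]
    refine integral_congr_ae (Filter.Eventually.of_forall fun u => ?_)
    show G (u + (p.1 - p.2)) p = _
    rw [hG]
    unfold wigKer
    have h1 : x + (1 / 2 : ℝ) • (u + (p.1 - p.2)) - p.1
        = (x - (1 / 2 : ℝ) • (p.1 + p.2)) + (1 / 2 : ℝ) • u := by module
    have h2 : x - (1 / 2 : ℝ) • (u + (p.1 - p.2)) - p.2
        = (x - (1 / 2 : ℝ) • (p.1 + p.2)) - (1 / 2 : ℝ) • u := by module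
    have h3 : (inner ℝ (u + (p.1 - p.2)) ξ : ℝ) = (inner ℝ u ξ : ℝ) + (inner ℝ (p.1 - p.2) ξ : ℝ) :=
      inner_add_left _ _ _
    rw [h1, h2, h3]
    have hexp : Complex.exp (-(2 * π * ((inner ℝ u ξ + inner ℝ (p.1 - p.2) ξ : ℝ))) * Complex.I)
        = Complex.exp (-(2 * π * (inner ℝ (p.1 - p.2) ξ : ℝ)) * Complex.I) *
          Complex.exp (-(2 * π * (inner ℝ u ξ : ℝ)) * Complex.I) := by
      rw [← Complex.exp_add]
      congr 1
      push_cast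
      ring
    rw [hexp]
    simp only []
    ring
  calc crossWigner (fun s => ∫ y, f (s - y) ∂μ) (fun s => ∫ y, h (s - y) ∂μ) x ξ
      = ∫ u, ∫ p, G u p ∂P := stepB
    _ = ∫ p, (∫ u, G u p) ∂P := integral_integral_swap hGint
    _ = ∫ y, ∫ y', (∫ u, G u (y, y')) ∂μ ∂μ := integral_prod (fun p => ∫ u, G u p) hGint.integral_prod_right
    _ = ∫ y, ∫ y', Complex.exp (-(2 * π * (inner ℝ (y - y') ξ : ℝ)) * Complex.I) *
          crossWigner (⇑f) (⇑h) (x - (1 / 2 : ℝ) • (y + y')) ξ ∂μ ∂μ := by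
        refine integral_congr_ae (Filter.Eventually.of_forall fun y => ?_)
        refine integral_congr_ae (Filter.Eventually.of_forall fun y' => ?_)
        exact stepD (y, y')
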